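/- Let r ≥ 2 and n, t ≥ 1 be integers and let 𝔉_1,…,𝔉_r ⊆ 𝒫([n]) be r-cross t-intersecting families with maximal necessary intersection point a_*. Then for every j ∈ [r] and every F ∈ 𝔉_j(a_*), the set F \ {a_*} is not in 𝔉_j. -/

import Mathlib

open Finset

/-- The shift operation `σ_{ij}` on a set `F ⊆ ℕ`. -/
def shift (i j : ℕ) (F : Finset ℕ) : Finset ℕ :=
  if j ∈ F ∧ i ∉ F then insert i (F.erase j) else F

/-- The shift operation on a family. -/
def shiftFam (i j : ℕ) (𝔉 : Finset (Finset ℕ)) : Finset (Finset ℕ) :=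
  𝔉.image (shift i j) ∪ 𝔉.filter (fun F => shift i j F ∈ 𝔉)

/-- A family of subsets of `[n] = {1,…,n}` is shifted. -/
def IsShifted (n : ℕ) (𝔉 : Finset (Finset ℕ)) : Prop :=
  ∀ i j : ℕ, 1 ≤ i → i < j → j ≤ n → ∀ F ∈ 𝔉, shift i j F ∈ 𝔉

/-- The intersection `⋂_{i ∈ s} G i` (for `s` nonempty). -/
def interOn {r : ℕ} (s : Finset (Fin r)) (G : Fin r → Finset ℕ) : Finset ℕ :=
  (s.sup G).filter fun x => ∀ i ∈ s, x ∈ G i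

/-- The intersection `⋂_{i} G i`. -/
def interAll {r : ℕ} (G : Fin r → Finset ℕ) : Finset ℕ :=
  interOn Finset.univ G

/-- Families `𝔉 0, …, 𝔉 (r-1)` are `r`-cross `t`-intersecting. -/
def CrossIntersecting {r : ℕ} (t : ℕ) (𝔉 : Fin r → Finset (Finset ℕ)) : Prop :=
  ∀ G : Fin r → Finset ℕ, (∀ i, G i ∈ 𝔉 i) → t ≤ (interAll G).card

/-- `a` is a necessary intersection point of the cross `t`-intersecting families `𝔉`. -/
def IsNIP {r : ℕ} (t : ℕ) (𝔉 : Fin r → Finset (Finset ℕ)) (a : ℕ) : Prop :=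
  ∃ G : Fin r → Finset ℕ, (∀ i, G i ∈ 𝔉 i) ∧
    (Finset.Icc 1 a ∩ interAll G).card = t ∧ a ∈ interAll G

/-- An intersecting family. -/
def Intersecting' (𝔉 : Finset (Finset ℕ)) : Prop :=
  ∀ F ∈ 𝔉, ∀ F' ∈ 𝔉, (F ∩ F').Nonempty

/-- `a` is a necessary intersection point of the intersecting family `𝔉`. -/
def IsNIP1 (𝔉 : Finset (Finset ℕ)) (a : ℕ) : Prop :=
  ∃ F ∈ 𝔉, ∃ F' ∈ 𝔉, (Finset.Icc 1 a ∩ F ∩ F').card = 1 ∧ a ∈ F ∩ F'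

/-- `A_{n,a,t} = {F ⊆ [n] : |F ∩ [a]| ≥ t}`. -/
def famA (n a t : ℕ) : Finset (Finset ℕ) :=
  (Finset.Icc 1 n).powerset.filter (fun F => t ≤ (F ∩ Finset.Icc 1 a).card)

/-- `B_{n,a} = {F ⊆ [n] : [a] ⊆ F}`. -/
def famB (n a : ℕ) : Finset (Finset ℕ) :=
  (Finset.Icc 1 n).powerset.filter (fun F => Finset.Icc 1 a ⊆ F)

/-- `F ∈ 𝔉 j` depends on `a`, i.e. `F ∈ 𝔉_j(a)`. -/
def FamDependsOn {r : ℕ} (t : ℕ) (𝔉 : Fin r → Finset (Finset ℕ)) (a : ℕ) (j : Fin r)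
    (F : Finset ℕ) : Prop :=
  F ∈ 𝔉 j ∧ ∃ G : Fin r → Finset ℕ, (∀ i, i ≠ j → G i ∈ 𝔉 i) ∧
    (Finset.Icc 1 a ∩ F ∩ interOn (Finset.univ.erase j) G).card = t ∧
    a ∈ F ∩ interOn (Finset.univ.erase j) G

lemma erase_univ_nonempty {r : ℕ} (hr : 2 ≤ r) (i : Fin r) :
    (Finset.univ.erase i).Nonempty := by
  rw [← Finset.card_pos, Finset.card_erase_of_mem (Finset.mem_univ i),
    Finset.card_univ, Fintype.card_fin]
  omega

lemma mem_interOn {r : ℕ} {s : Finset (Fin r)} (hs : s.Nonempty) {G : Fin r → Finset ℕ}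
    {x : ℕ} : x ∈ interOn s G ↔ ∀ i ∈ s, x ∈ G i := by
  unfold interOn
  simp only [Finset.mem_filter, Finset.mem_sup, and_iff_right_iff_imp]
  intro h
  obtain ⟨i, hi⟩ := hs
  exact ⟨i, hi, h i hi⟩

/-- For `F ∈ 𝔉_j(a_*)`, the set `F \ {a_*}` is not in `𝔉_j`. -/
theorem erase_not_mem_of_dependsOn
    (r n t : ℕ) (hr : 2 ≤ r) (hn : 1 ≤ n) (ht : 1 ≤ t)
    (𝔉 : Fin r → Finset (Finset ℕ)) (hsub : ∀ i, 𝔉 i ⊆ (Finset.Icc 1 n).powerset)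
    (hcross : CrossIntersecting t 𝔉)
    (astar : ℕ) (hNIP : IsNIP t 𝔉 astar) (hmax : ∀ b, IsNIP t 𝔉 b → b ≤ astar)
    (j : Fin r) (F : Finset ℕ) (hdep : FamDependsOn t 𝔉 astar j F) :
    F.erase astar ∉ 𝔉 j := by
  intro hmem
  obtain ⟨hFmem, G, hG, hcard, hmemint⟩ := hdep
  set I := interOn (Finset.univ.erase j) G with hI
  rw [Finset.mem_inter] at hmemint
  obtain ⟨haF, haI⟩ := hmemint
  have hFsub : F ⊆ Finset.Icc 1 n := Finset.mem_powerset.mp (hsub j hFmem)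
  have ha1 : 1 ≤ astar := (Finset.mem_Icc.mp (hFsub haF)).1
  set F' := F.erase astar with hF'
  set G' : Fin r → Finset ℕ := Function.update G j F' with hG'def
  have hG' : ∀ i, G' i ∈ 𝔉 i := by
    intro i
    by_cases h : i = j
    · subst h; simp only [hG'def, Function.update_self]; exact hmem
    · simp only [hG'def, Function.update_of_ne h]; exact hG i h
  haveI : Nonempty (Fin r) := ⟨j⟩
  have hS : interAll G' = F' ∩ I := by
    ext x
    rw [interAll, mem_interOn Finset.univ_nonempty, Finset.mem_inter,
      mem_interOn (erase_univ_nonempty hr j)]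
    constructor
    · intro h
      refine ⟨?_, fun i hi => ?_⟩
      · have := h j (Finset.mem_univ j)
        simpa [hG'def] using this
      · have := h i (Finset.mem_univ i)
        rw [hG'def, Function.update_of_ne (Finset.ne_of_mem_erase hi)] at this
        exact this
    · intro ⟨h1, h2⟩ i _
      by_cases hij : i = j
      · subst hij; simpa [hG'def] using h1
      · rw [hG'def, Function.update_of_ne hij]
        exact h2 i (Finset.mem_erase.mpr ⟨hij, Finset.mem_univ i⟩)
  have hcardS : t ≤ (F' ∩ I).card := by rw [← hS]; exact hcross G' hG'
  have hA : Finset.Icc 1 astar ∩ F' ∩ I = (Finset.Icc 1 astar ∩ F ∩ I).erase astar := by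
    ext x
    simp only [Finset.mem_inter, Finset.mem_erase, hF']
    tauto
  have hcardA : (Finset.Icc 1 astar ∩ F' ∩ I).card = t - 1 := by
    rw [hA, Finset.card_erase_of_mem, hcard]
    simp only [Finset.mem_inter, Finset.mem_Icc]
    exact ⟨⟨⟨ha1, le_refl _⟩, haF⟩, haI⟩
  have hex : ∃ b ∈ F' ∩ I, astar < b := by
    by_contra h
    push_neg at h
    have hsub2 : F' ∩ I ⊆ Finset.Icc 1 astar ∩ F' ∩ I := by
      intro x hx
      have hx1 : 1 ≤ x := (Finset.mem_Icc.mp (hFsub (Finset.mem_of_mem_erase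
        (Finset.mem_inter.mp hx).1))).1
      rw [Finset.inter_assoc, Finset.mem_inter]
      exact ⟨Finset.mem_Icc.mpr ⟨hx1, h x hx⟩, hx⟩
    have := Finset.card_le_card hsub2
    omega
  obtain ⟨b0, hb0, hb0lt⟩ := hex
  set T := (F' ∩ I).filter (fun x => astar < x) with hT
  have hTne : T.Nonempty := ⟨b0, Finset.mem_filter.mpr ⟨hb0, hb0lt⟩⟩
  set b := T.min' hTne with hb
  have hbT := T.min'_mem hTne
  rw [Finset.mem_filter] at hbT
  obtain ⟨hbS, hbgt⟩ := hbT
  have hbmin : ∀ x ∈ F' ∩ I, astar < x → b ≤ x := fun x hx hlt =>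
    T.min'_le x (Finset.mem_filter.mpr ⟨hx, hlt⟩)
  have hNIPb : IsNIP t 𝔉 b := by
    refine ⟨G', hG', ?_, ?_⟩
    · rw [hS]
      have heq : Finset.Icc 1 b ∩ (F' ∩ I) = insert b (Finset.Icc 1 astar ∩ F' ∩ I) := by
        ext x
        simp only [Finset.mem_inter, Finset.mem_insert, Finset.mem_Icc]
        constructor
        · rintro ⟨⟨hx1, hxb⟩, hxF, hxI⟩
          by_cases hxa : x ≤ astar
          · exact Or.inr ⟨⟨⟨hx1, hxa⟩, hxF⟩, hxI⟩
          · left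
            have := hbmin x (Finset.mem_inter.mpr ⟨hxF, hxI⟩) (by omega)
            omega
        · rintro (rfl | ⟨⟨⟨hx1, hxa⟩, hxF⟩, hxI⟩)
          · have hb1 : 1 ≤ b := by omega
            exact ⟨⟨hb1, le_refl _⟩, (Finset.mem_inter.mp hbS).1, (Finset.mem_inter.mp hbS).2⟩
          · exact ⟨⟨hx1, by omega⟩, hxF, hxI⟩
      rw [heq, Finset.card_insert_of_notMem, hcardA]
      · omega
      · simp only [Finset.mem_inter, Finset.mem_Icc]
        rintro ⟨⟨_, h⟩, _⟩
        omega
    · rw [hS]; exact hbS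
  have := hmax b hNIPb
  omega
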